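/- If two channel configurations (h_m) and (g_m) of M row vectors satisfy h_i h_jᴴ = g_i g_jᴴ for all i, j, and the WMMSE iterates are initialized with the same scalars (u_m⁰, w_m⁰), then the scalar iterates (u_mᵗ, w_mᵗ) produced by the WMMSE recursion coincide for the two configurations for all t. -/

import Mathlib

open Matrix
open scoped BigOperators

/-- The matrix `σ²I + ∑ λ_m^{t} h_mᴴ h_m` appearing in the WMMSE `v`-update. -/
noncomputable def wmmseA {N M : ℕ} (σ2 PT : ℝ) (α : Fin M → ℝ) (h : Fin M → Fin N → ℂ)
    (u w : Fin M → ℂ) : Matrix (Fin N) (Fin N) ℂ :=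
  (σ2 : ℂ) • (1 : Matrix (Fin N) (Fin N) ℂ) +
    ∑ m, ((PT : ℂ) * (α m : ℂ) * u m * w m * star (u m) /
        ∑ n, (α n : ℂ) * u n * w n * star (u n)) •
      Matrix.vecMulVec (star (h m)) (h m)

/-- WMMSE `v`-update: `v_k = (σ²I + ∑ λ_m h_mᴴ h_m)⁻¹ h_kᴴ γ_k`. -/
noncomputable def wmmseV {N M : ℕ} (σ2 PT : ℝ) (α : Fin M → ℝ) (h : Fin M → Fin N → ℂ)
    (u w : Fin M → ℂ) : Fin M → Fin N → ℂ :=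
  fun k => (wmmseA σ2 PT α h u w)⁻¹.mulVec
    (((PT : ℂ) * (α k : ℂ) * u k * w k /
        ∑ n, (α n : ℂ) * u n * w n * star (u n)) • star (h k))

/-- WMMSE `u`-update. -/
noncomputable def wmmseU {N M : ℕ} (σ2 PT : ℝ) (h : Fin M → Fin N → ℂ)
    (v : Fin M → Fin N → ℂ) : Fin M → ℂ :=
  fun k => (((σ2 / PT : ℝ) : ℂ) * (∑ m, ∑ i, star (v m i) * v m i) +
      ∑ m, (∑ i, h k i * v m i) * star (∑ i, h k i * v m i))⁻¹ *
    ∑ i, h k i * v k i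

/-- WMMSE `w`-update. -/
noncomputable def wmmseW {N M : ℕ} (h : Fin M → Fin N → ℂ) (v : Fin M → Fin N → ℂ)
    (u : Fin M → ℂ) : Fin M → ℂ :=
  fun k => (1 - star (u k) * ∑ i, h k i * v k i)⁻¹

noncomputable def wmmseC {M : ℕ} (PT : ℝ) (α : Fin M → ℝ) (u w : Fin M → ℂ) : Fin M → ℂ :=
  fun m => (PT : ℂ) * (α m : ℂ) * u m * w m / ∑ n, (α n : ℂ) * u n * w n * star (u n)

noncomputable def wmmseD {M : ℕ} (PT : ℝ) (α : Fin M → ℝ) (u w : Fin M → ℂ) :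
    Matrix (Fin M) (Fin M) ℂ :=
  Matrix.diagonal (fun m => wmmseC PT α u w m * star (u m))

noncomputable def wmmseK {M : ℕ} (σ2 PT : ℝ) (α : Fin M → ℝ) (u w : Fin M → ℂ)
    (G : Matrix (Fin M) (Fin M) ℂ) : Matrix (Fin M) (Fin M) ℂ :=
  (σ2 : ℂ) • 1 + wmmseD PT α u w * G


lemma wmmseA_eq {N M : ℕ} (σ2 PT : ℝ) (α : Fin M → ℝ) (h : Fin M → Fin N → ℂ)
    (u w : Fin M → ℂ) :
    wmmseA σ2 PT α h u w = (σ2 : ℂ) • 1 +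
      (Matrix.of h)ᴴ * wmmseD PT α u w * Matrix.of h := by
  unfold wmmseA wmmseD wmmseC
  rw [Matrix.mul_assoc]
  congr 1
  ext i j
  simp only [Matrix.sum_apply, Matrix.smul_apply, Matrix.vecMulVec_apply, smul_eq_mul,
    Matrix.mul_apply, Matrix.diagonal_apply, ite_mul, zero_mul, Finset.sum_ite_eq,
    Finset.mem_univ, if_true, Matrix.conjTranspose_apply, Matrix.of_apply,
    Pi.star_apply]
  refine Finset.sum_congr rfl fun m _ => ?_
  ring

lemma isUnit_small {N M : ℕ} (σ2 : ℝ) (hσ : (σ2 : ℂ) ≠ 0)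
    (D : Matrix (Fin M) (Fin M) ℂ) (H : Matrix (Fin M) (Fin N) ℂ)
    (hA : IsUnit ((σ2 : ℂ) • (1 : Matrix (Fin N) (Fin N) ℂ) + Hᴴ * D * H)) :
    IsUnit ((σ2 : ℂ) • (1 : Matrix (Fin M) (Fin M) ℂ) + D * (H * Hᴴ)) := by
  rw [Matrix.isUnit_iff_isUnit_det] at hA ⊢
  have key : ∀ (P : Type) , True := fun _ => trivial
  have e1 : (σ2 : ℂ) • (1 : Matrix (Fin N) (Fin N) ℂ) + Hᴴ * D * H
      = (σ2 : ℂ) • (1 + ((σ2 : ℂ)⁻¹ • (Hᴴ * D)) * H) := by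
    rw [smul_add, Matrix.smul_mul, smul_smul, mul_inv_cancel₀ hσ, one_smul]
  have e2 : (σ2 : ℂ) • (1 : Matrix (Fin M) (Fin M) ℂ) + D * (H * Hᴴ)
      = (σ2 : ℂ) • (1 + ((σ2 : ℂ)⁻¹ • D) * (H * Hᴴ)) := by
    rw [smul_add, Matrix.smul_mul, smul_smul, mul_inv_cancel₀ hσ, one_smul]
  have hx : H * ((σ2 : ℂ)⁻¹ • (Hᴴ * D)) = (H * Hᴴ) * ((σ2 : ℂ)⁻¹ • D) := by
    rw [Matrix.mul_smul, Matrix.mul_smul, Matrix.mul_assoc]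
  have d1 : (1 + ((σ2 : ℂ)⁻¹ • (Hᴴ * D)) * H).det
      = (1 + ((σ2 : ℂ)⁻¹ • D) * (H * Hᴴ)).det := by
    rw [Matrix.det_one_add_mul_comm, hx, Matrix.det_one_add_mul_comm]
  rw [e1, Matrix.det_smul, d1] at hA
  rw [e2, Matrix.det_smul]
  rw [isUnit_iff_ne_zero] at hA ⊢
  exact mul_ne_zero (pow_ne_zero _ hσ) (fun hz => hA (by rw [hz, mul_zero]))

lemma pushthrough {N M : ℕ} (A : Matrix (Fin N) (Fin N) ℂ) (K : Matrix (Fin M) (Fin M) ℂ)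
    (H : Matrix (Fin M) (Fin N) ℂ) (hA : IsUnit A) (hK : IsUnit K)
    (hcomm : A * Hᴴ = Hᴴ * K) : A⁻¹ * Hᴴ = Hᴴ * K⁻¹ := by
  have hAd := (Matrix.isUnit_iff_isUnit_det A).mp hA
  have hKd := (Matrix.isUnit_iff_isUnit_det K).mp hK
  calc A⁻¹ * Hᴴ = A⁻¹ * Hᴴ * (K * K⁻¹) := by
        rw [Matrix.mul_nonsing_inv K hKd, Matrix.mul_one]
    _ = A⁻¹ * (Hᴴ * K) * K⁻¹ := by simp only [Matrix.mul_assoc]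
    _ = A⁻¹ * (A * Hᴴ) * K⁻¹ := by rw [hcomm]
    _ = Hᴴ * K⁻¹ := by rw [← Matrix.mul_assoc, Matrix.nonsing_inv_mul A hAd, Matrix.one_mul]

lemma comm_AK {N M : ℕ} (σ2 PT : ℝ) (α : Fin M → ℝ) (h : Fin M → Fin N → ℂ)
    (u w : Fin M → ℂ) :
    wmmseA σ2 PT α h u w * (Matrix.of h)ᴴ =
      (Matrix.of h)ᴴ * wmmseK σ2 PT α u w (Matrix.of h * (Matrix.of h)ᴴ) := by
  rw [wmmseA_eq]
  unfold wmmseK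
  rw [Matrix.add_mul, Matrix.mul_add, Matrix.smul_mul, Matrix.mul_smul, Matrix.one_mul,
    Matrix.mul_one]
  simp only [Matrix.mul_assoc]

lemma isUnit_K {N M : ℕ} (σ2 PT : ℝ) (hσ : (σ2 : ℂ) ≠ 0) (α : Fin M → ℝ)
    (h : Fin M → Fin N → ℂ) (u w : Fin M → ℂ)
    (hA : IsUnit (wmmseA σ2 PT α h u w)) :
    IsUnit (wmmseK σ2 PT α u w (Matrix.of h * (Matrix.of h)ᴴ)) := by
  rw [wmmseA_eq] at hA
  exact isUnit_small σ2 hσ _ _ hA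

lemma v_eq {N M : ℕ} (σ2 PT : ℝ) (hσ : (σ2 : ℂ) ≠ 0) (α : Fin M → ℝ)
    (h : Fin M → Fin N → ℂ) (u w : Fin M → ℂ)
    (hA : IsUnit (wmmseA σ2 PT α h u w)) (m : Fin M) (i : Fin N) :
    wmmseV σ2 PT α h u w m i = wmmseC PT α u w m *
      ((Matrix.of h)ᴴ * (wmmseK σ2 PT α u w (Matrix.of h * (Matrix.of h)ᴴ))⁻¹) i m := by
  have hpt := pushthrough (wmmseA σ2 PT α h u w) _ (Matrix.of h) hA
    (isUnit_K σ2 PT hσ α h u w hA) (comm_AK σ2 PT α h u w)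
  have step : wmmseV σ2 PT α h u w m i = wmmseC PT α u w m *
      ((wmmseA σ2 PT α h u w)⁻¹ * (Matrix.of h)ᴴ) i m := by
    unfold wmmseV wmmseC
    simp only [Matrix.mulVec, dotProduct, Pi.smul_apply, Pi.star_apply, smul_eq_mul,
      Matrix.mul_apply, Matrix.conjTranspose_apply, Matrix.of_apply, Finset.mul_sum]
    exact Finset.sum_congr rfl fun j _ => by ring
  rw [step, hpt]

lemma sum_hv {N M : ℕ} (σ2 PT : ℝ) (hσ : (σ2 : ℂ) ≠ 0) (α : Fin M → ℝ)
    (h : Fin M → Fin N → ℂ) (u w : Fin M → ℂ)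
    (hA : IsUnit (wmmseA σ2 PT α h u w)) (k m : Fin M) :
    ∑ i, h k i * wmmseV σ2 PT α h u w m i = wmmseC PT α u w m *
      ((Matrix.of h * (Matrix.of h)ᴴ) *
        (wmmseK σ2 PT α u w (Matrix.of h * (Matrix.of h)ᴴ))⁻¹) k m := by
  simp only [fun i => v_eq σ2 PT hσ α h u w hA m i]
  rw [Matrix.mul_assoc, Matrix.mul_apply, Finset.mul_sum]
  exact Finset.sum_congr rfl fun i _ => by simp only [Matrix.of_apply]; ring

lemma sum_vv {N M : ℕ} (σ2 PT : ℝ) (hσ : (σ2 : ℂ) ≠ 0) (α : Fin M → ℝ)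
    (h : Fin M → Fin N → ℂ) (u w : Fin M → ℂ)
    (hA : IsUnit (wmmseA σ2 PT α h u w)) (m : Fin M) :
    ∑ i, star (wmmseV σ2 PT α h u w m i) * wmmseV σ2 PT α h u w m i =
      star (wmmseC PT α u w m) * wmmseC PT α u w m *
      (((wmmseK σ2 PT α u w (Matrix.of h * (Matrix.of h)ᴴ))⁻¹)ᴴ *
        ((Matrix.of h * (Matrix.of h)ᴴ) *
          (wmmseK σ2 PT α u w (Matrix.of h * (Matrix.of h)ᴴ))⁻¹)) m m := by
  set K := (wmmseK σ2 PT α u w (Matrix.of h * (Matrix.of h)ᴴ))⁻¹ with hKdef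
  set X := (Matrix.of h)ᴴ * K with hXdef
  have hXX : Xᴴ * X = Kᴴ * ((Matrix.of h * (Matrix.of h)ᴴ) * K) := by
    rw [hXdef, Matrix.conjTranspose_mul, Matrix.conjTranspose_conjTranspose]
    simp only [Matrix.mul_assoc]
  rw [← hXX, Matrix.mul_apply]
  simp only [fun i => v_eq σ2 PT hσ α h u w hA m i]
  rw [Finset.mul_sum]
  exact Finset.sum_congr rfl fun i _ => by
    simp only [Matrix.conjTranspose_apply, star_mul']; ring

/-- If two channel configurations have the same pairwise inner products
`h_i h_jᴴ = g_i g_jᴴ` and the WMMSE scalar iterates start from the same values,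
then the scalar iterates coincide for all iterations. -/
theorem stmt8 {N M : ℕ} (σ2 PT : ℝ) (hσ : 0 < σ2) (hPT : 0 < PT)
    (α : Fin M → ℝ) (hα : ∀ k, 0 < α k)
    (h g : Fin M → Fin N → ℂ)
    (hGram : ∀ i j, ∑ t, h i t * star (h j t) = ∑ t, g i t * star (g j t))
    (uh wh ug wg : ℕ → Fin M → ℂ)
    (h0 : uh 0 = ug 0) (h0' : wh 0 = wg 0)
    (hinvh : ∀ t, IsUnit (wmmseA σ2 PT α h (uh t) (wh t)))
    (hinvg : ∀ t, IsUnit (wmmseA σ2 PT α g (ug t) (wg t)))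
    (huh : ∀ t, uh (t + 1) = wmmseU σ2 PT h (wmmseV σ2 PT α h (uh t) (wh t)))
    (hwh : ∀ t, wh (t + 1) = wmmseW h (wmmseV σ2 PT α h (uh t) (wh t)) (uh (t + 1)))
    (hug : ∀ t, ug (t + 1) = wmmseU σ2 PT g (wmmseV σ2 PT α g (ug t) (wg t)))
    (hwg : ∀ t, wg (t + 1) = wmmseW g (wmmseV σ2 PT α g (ug t) (wg t)) (ug (t + 1))) :
    ∀ t, uh t = ug t ∧ wh t = wg t := by
  have hσ' : (σ2 : ℂ) ≠ 0 := by
    exact_mod_cast Complex.ofReal_ne_zero.mpr (ne_of_gt hσ)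
  have hGmat : Matrix.of h * (Matrix.of h)ᴴ = Matrix.of g * (Matrix.of g)ᴴ := by
    ext i j
    simpa [Matrix.mul_apply, Matrix.conjTranspose_apply, Matrix.of_apply] using hGram i j
  intro t
  induction t with
  | zero => exact ⟨h0, h0'⟩
  | succ t ih =>
    obtain ⟨ihu, ihw⟩ := ih
    have hAh : IsUnit (wmmseA σ2 PT α h (ug t) (wg t)) := by
      have := hinvh t; rwa [ihu, ihw] at this
    have hAg : IsUnit (wmmseA σ2 PT α g (ug t) (wg t)) := hinvg t
    set u := ug t
    set w := wg t
    have hS : ∀ k m, ∑ i, h k i * wmmseV σ2 PT α h u w m i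
        = ∑ i, g k i * wmmseV σ2 PT α g u w m i := by
      intro k m
      rw [sum_hv σ2 PT hσ' α h u w hAh k m, sum_hv σ2 PT hσ' α g u w hAg k m, hGmat]
    have hQ : ∀ m, ∑ i, star (wmmseV σ2 PT α h u w m i) * wmmseV σ2 PT α h u w m i
        = ∑ i, star (wmmseV σ2 PT α g u w m i) * wmmseV σ2 PT α g u w m i := by
      intro m
      rw [sum_vv σ2 PT hσ' α h u w hAh m, sum_vv σ2 PT hσ' α g u w hAg m, hGmat]
    have e1 : uh (t + 1) = ug (t + 1) := by
      rw [huh t, hug t, ihu, ihw]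
      funext k
      unfold wmmseU
      simp only [hS, hQ]
      rfl
    refine ⟨e1, ?_⟩
    rw [hwh t, hwg t, ihu, ihw, e1]
    funext k
    unfold wmmseW
    rw [hS k k]
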